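/- For every Gaussian integer v and every nonzero Gaussian integer z, there is exactly one Gaussian integer r ∈ 𝓕(z) with v ≡ r (mod z); that is, the Gaussian integers lying in 𝓕(z) form a complete system of residues modulo z. -/

import Mathlib

/-- The fundamental domain `𝓕(z)` of a Gaussian integer `z`:
the semi-open square `{ z(α + βi) : -1/2 < α ≤ 1/2, -1/2 < β ≤ 1/2 }` in `ℂ`. -/
def Fd (z : GaussianInt) : Set ℂ :=
  { w | ∃ α β : ℝ, w = (GaussianInt.toComplex z) * (α + β * Complex.I) ∧
      -(1/2 : ℝ) < α ∧ α ≤ 1/2 ∧ -(1/2 : ℝ) < β ∧ β ≤ 1/2 }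

lemma round_half (x : ℝ) :
    -(1/2 : ℝ) < x - (⌈x - 1/2⌉ : ℤ) ∧ x - (⌈x - 1/2⌉ : ℤ) ≤ 1/2 := by
  have h1 : (x - 1/2 : ℝ) ≤ (⌈x - 1/2⌉ : ℤ) := Int.le_ceil _
  have h2 : ((⌈x - 1/2⌉ : ℤ) : ℝ) < x - 1/2 + 1 := Int.ceil_lt_add_one _
  constructor <;> linarith

/-- For every Gaussian integer `v` and nonzero Gaussian integer `z`, there is exactly
one Gaussian integer `r ∈ 𝓕(z)` with `v ≡ r (mod z)`: the Gaussian integers in `𝓕(z)`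
form a complete system of residues modulo `z`. -/
theorem existsUnique_residue_in_Fd (v z : GaussianInt) (hz : z ≠ 0) :
    ∃! r : GaussianInt, GaussianInt.toComplex r ∈ Fd z ∧ z ∣ v - r := by
  have hzc : (GaussianInt.toComplex z : ℂ) ≠ 0 := by simpa using hz
  set w : ℂ := GaussianInt.toComplex v / GaussianInt.toComplex z with hw
  have hv : GaussianInt.toComplex v = GaussianInt.toComplex z * w := by
    rw [hw, mul_div_cancel₀ _ hzc]
  clear_value w
  set q : GaussianInt := ⟨⌈w.re - 1/2⌉, ⌈w.im - 1/2⌉⟩ with hq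
  have hqre : q.re = ⌈w.re - 1/2⌉ := rfl
  have hqim : q.im = ⌈w.im - 1/2⌉ := rfl
  have hqc : GaussianInt.toComplex q =
      ((⌈w.re - 1/2⌉ : ℤ) : ℝ) + ((⌈w.im - 1/2⌉ : ℤ) : ℝ) * Complex.I := by
    rw [GaussianInt.toComplex_def, hqre, hqim]; push_cast; ring
  have hwri : w = (w.re : ℝ) + (w.im : ℝ) * Complex.I := (Complex.re_add_im w).symm
  refine ⟨v - z * q, ⟨⟨w.re - (⌈w.re - 1/2⌉ : ℤ), w.im - (⌈w.im - 1/2⌉ : ℤ), ?_,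
      (round_half w.re).1, (round_half w.re).2, (round_half w.im).1, (round_half w.im).2⟩,
      ⟨q, by ring⟩⟩, ?_⟩
  · rw [GaussianInt.toComplex_sub, GaussianInt.toComplex_mul, hqc, hv,
      Complex.ofReal_sub, Complex.ofReal_sub, Complex.ofReal_intCast, Complex.ofReal_intCast]
    linear_combination (GaussianInt.toComplex z) * hwri
  · rintro r ⟨⟨α, β, hr, hα1, hα2, hβ1, hβ2⟩, c, hc⟩
    have hrc : GaussianInt.toComplex r = GaussianInt.toComplex z * w
        - GaussianInt.toComplex z * GaussianInt.toComplex c := by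
      have h : GaussianInt.toComplex (v - r) = GaussianInt.toComplex (z * c) := by rw [hc]
      rw [GaussianInt.toComplex_sub, GaussianInt.toComplex_mul, hv] at h
      linear_combination -h
    have hkey : (α : ℂ) + (β : ℝ) * Complex.I = w - GaussianInt.toComplex c := by
      have h2 : GaussianInt.toComplex z * ((α : ℂ) + (β : ℝ) * Complex.I)
          = GaussianInt.toComplex z * (w - GaussianInt.toComplex c) := by
        linear_combination hr.symm.trans hrc
      exact mul_left_cancel₀ hzc h2
    have hre : α = w.re - (c.re : ℝ) := by
      have h := congrArg Complex.re hkey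
      simpa [Complex.add_re, Complex.sub_re, Complex.ofReal_re, Complex.mul_re,
        Complex.ofReal_im, Complex.I_re, Complex.I_im, GaussianInt.intCast_re] using h
    have him : β = w.im - (c.im : ℝ) := by
      have h := congrArg Complex.im hkey
      simpa [Complex.add_im, Complex.sub_im, Complex.ofReal_im, Complex.mul_im,
        Complex.ofReal_re, Complex.I_re, Complex.I_im, GaussianInt.intCast_im] using h
    have hcre : ⌈w.re - 1/2⌉ = c.re := by
      rw [Int.ceil_eq_iff]
      constructor
      · rw [hre] at hα1; linarith
      · rw [hre] at hα2; linarith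
    have hcim : ⌈w.im - 1/2⌉ = c.im := by
      rw [Int.ceil_eq_iff]
      constructor
      · rw [him] at hβ1; linarith
      · rw [him] at hβ2; linarith
    have hqceq : q = c := Zsqrtd.ext (hqre.trans hcre) (hqim.trans hcim)
    have : r = v - z * c := by linear_combination -hc
    rw [this, hqceq]
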